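/- For every finitary commutative regular expression e (one containing no star) and every commutative regular expression f, if ⟦e⟧ ⊆ ⟦f⟧ then e ≤ f is derivable, i.e. e ∪ f ≡ f. -/

import Mathlib

namespace CKAnote

/-- Commutative regular expressions over an alphabet `α`. -/
inductive CRE (α : Type) where
  | zero : CRE α
  | one : CRE α
  | letter : α → CRE α
  | mul : CRE α → CRE α → CRE α
  | union : CRE α → CRE α → CRE α
  | star : CRE α → CRE α

set_option linter.unusedSectionVars false

variable {α : Type} [Fintype α] [DecidableEq α]

/-- Semantics of a commutative regular expression as a set of Parikh vectors. -/
def sem : CRE α → Set (α → ℕ)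
  | .zero => ∅
  | .one => {0}
  | .letter a => {Pi.single a 1}
  | .mul e f => {w | ∃ u ∈ sem e, ∃ v ∈ sem f, w = u + v}
  | .union e f => sem e ∪ sem f
  | .star e => ↑(AddSubmonoid.closure (sem e))

/-- Provable equality: the smallest congruence containing the axioms of
commutative Kleene algebra (where `e ≤ f` abbreviates `e ∪ f ≡ f`). -/
inductive CKA : CRE α → CRE α → Prop
  | refl (e : CRE α) : CKA e e
  | symm {e f : CRE α} : CKA e f → CKA f e
  | trans {e f g : CRE α} : CKA e f → CKA f g → CKA e g
  | mul_congr {e e' f f' : CRE α} : CKA e e' → CKA f f' → CKA (e.mul f) (e'.mul f')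
  | union_congr {e e' f f' : CRE α} : CKA e e' → CKA f f' → CKA (e.union f) (e'.union f')
  | star_congr {e e' : CRE α} : CKA e e' → CKA e.star e'.star
  | mul_assoc (e f g : CRE α) : CKA (e.mul (f.mul g)) ((e.mul f).mul g)
  | mul_comm (e f : CRE α) : CKA (e.mul f) (f.mul e)
  | one_mul (e : CRE α) : CKA (CRE.one.mul e) e
  | union_assoc (e f g : CRE α) : CKA (e.union (f.union g)) ((e.union f).union g)
  | union_comm (e f : CRE α) : CKA (e.union f) (f.union e)
  | union_idem (e : CRE α) : CKA (e.union e) e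
  | zero_union (e : CRE α) : CKA (CRE.zero.union e) e
  | zero_mul (e : CRE α) : CKA (CRE.zero.mul e) CRE.zero
  | left_distrib (e f g : CRE α) : CKA (e.mul (f.union g)) ((e.mul f).union (e.mul g))
  | star_unfold (e : CRE α) : CKA ((CRE.one.union (e.mul e.star)).union e.star) e.star
  | star_lfp {e f : CRE α} : CKA ((e.mul f).union f) f → CKA ((e.star.mul f).union f) f

/-- `e ≤ f`, i.e. `e ∪ f ≡ f`. -/
def leq (e f : CRE α) : Prop := CKA (e.union f) f

/-- `e^n`, the `n`-fold product of `e` with itself. -/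
def pow (e : CRE α) : ℕ → CRE α
  | 0 => CRE.one
  | n + 1 => e.mul (pow e n)

/-- `e^{<n}`, i.e. `(e ∪ 1)^(n-1)` for `n > 0` and `0` for `n = 0`. -/
def ltPow (e : CRE α) : ℕ → CRE α
  | 0 => CRE.zero
  | n + 1 => pow (e.union CRE.one) n

/-- Finite union of a list of expressions. -/
def unionList : List (CRE α) → CRE α
  | [] => CRE.zero
  | e :: l => e.union (unionList l)

/-- Finite product of a list of expressions. -/
def prodList : List (CRE α) → CRE α
  | [] => CRE.one
  | e :: l => e.mul (prodList l)

/-- `expr(u)`: the product over `a ∈ α` of `u a` copies of the letter `a`. -/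
noncomputable def exprVec (u : α → ℕ) : CRE α :=
  prodList ((Finset.univ : Finset α).toList.map (fun a => pow (CRE.letter a) (u a)))

/-- The union `⋃_{b ∈ B} expr(b)` for a finite set of Parikh vectors `B`. -/
noncomputable def unionVecs (B : Finset (α → ℕ)) : CRE α :=
  unionList (B.toList.map exprVec)

/-- The linear expression `expr(u) · (⋃_{b ∈ B} expr(b))*`. -/
noncomputable def linExpr (u : α → ℕ) (B : Finset (α → ℕ)) : CRE α :=
  (exprVec u).mul (unionVecs B).star

/-- A finite set of Parikh vectors is independent when every Parikh vector
admits at most one representation as an `ℕ`-linear combination of its elements. -/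
def Independent (B : Finset (α → ℕ)) : Prop :=
  ∀ c d : (α → ℕ) → ℕ, (∑ b ∈ B, c b • b) = (∑ b ∈ B, d b • b) → ∀ b ∈ B, c b = d b

/-- The semilinear expression associated to a list of linear data:
the finite union of the corresponding linear expressions. -/
noncomputable def semiLin (L : List ((α → ℕ) × Finset (α → ℕ))) : CRE α :=
  unionList (L.map (fun p => linExpr p.1 p.2))

/-- The dimension of a semilinear expression: the maximum of the dimensions
of its linear components. -/
def dimSL (L : List ((α → ℕ) × Finset (α → ℕ))) : ℕ :=
  (L.map (fun p => p.2.card)).foldr max 0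

/-- Finitary (star-free) expressions. -/
def NoStar : CRE α → Prop
  | .zero => True
  | .one => True
  | .letter _ => True
  | .mul e f => NoStar e ∧ NoStar f
  | .union e f => NoStar e ∧ NoStar f
  | .star _ => False

/-- Coordinatewise embedding of `ℕ^α` into `ℚ^α`. -/
def toQ (v : α → ℕ) : α → ℚ := fun a => (v a : ℚ)

section Lemmas

lemma cka_leq {e f : CRE α} (h : CKA e f) : leq e f :=
  (CKA.union_congr h (CKA.refl f)).trans (CKA.union_idem f)

lemma leq_refl (e : CRE α) : leq e e := CKA.union_idem e

lemma leq_trans {e f g : CRE α} (h1 : leq e f) (h2 : leq f g) : leq e g := by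
  unfold leq at *
  exact ((CKA.union_congr (CKA.refl e) h2.symm).trans
    ((CKA.union_assoc e f g).trans
      ((CKA.union_congr h1 (CKA.refl g)).trans h2)))

lemma le_union_left (e f : CRE α) : leq e (e.union f) :=
  (CKA.union_assoc e e f).trans (CKA.union_congr (CKA.union_idem e) (CKA.refl f))

lemma le_union_right (e f : CRE α) : leq f (e.union f) :=
  leq_trans (le_union_left f e) (cka_leq (CKA.union_comm f e))

lemma union_le {e f g : CRE α} (h1 : leq e g) (h2 : leq f g) : leq (e.union f) g :=
  ((CKA.union_assoc e f g).symm).trans ((CKA.union_congr (CKA.refl e) h2).trans h1)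

lemma mul_one' (e : CRE α) : CKA (e.mul CRE.one) e :=
  (CKA.mul_comm e CRE.one).trans (CKA.one_mul e)

lemma mul_mono_left {e e' : CRE α} (f : CRE α) (h : leq e e') : leq (e.mul f) (e'.mul f) := by
  unfold leq at *
  exact (CKA.union_congr (CKA.mul_comm e f) (CKA.mul_comm e' f)).trans
    (((CKA.left_distrib f e e').symm).trans
      ((CKA.mul_congr (CKA.refl f) h).trans (CKA.mul_comm f e')))

lemma mul_mono {e e' f f' : CRE α} (h1 : leq e e') (h2 : leq f f') :
    leq (e.mul f) (e'.mul f') := by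
  have h3 : leq (e.mul f) (e'.mul f) := mul_mono_left f h1
  have h4 : leq (e'.mul f) (e'.mul f') := by
    have := mul_mono_left e' h2
    exact leq_trans (cka_leq (CKA.mul_comm e' f))
      (leq_trans this (cka_leq (CKA.mul_comm f' e')))
  exact leq_trans h3 h4

lemma one_le_star (e : CRE α) : leq CRE.one e.star :=
  leq_trans (le_union_left CRE.one (e.mul e.star)) (CKA.star_unfold e)

lemma mul_star_le (e : CRE α) : leq (e.mul e.star) e.star :=
  leq_trans (le_union_right CRE.one (e.mul e.star)) (CKA.star_unfold e)

lemma le_star (e : CRE α) : leq e e.star :=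
  leq_trans (cka_leq (mul_one' e).symm)
    (leq_trans (mul_mono (leq_refl e) (one_le_star e)) (mul_star_le e))

lemma star_mul_star_le (e : CRE α) : leq (e.star.mul e.star) e.star :=
  CKA.star_lfp (mul_star_le e)

/-- shuffle: (A·B)·(C·D) ≡ (A·C)·(B·D) -/
lemma mul_shuffle (A B C D : CRE α) :
    CKA ((A.mul B).mul (C.mul D)) ((A.mul C).mul (B.mul D)) := by
  refine ((CKA.mul_assoc A B (C.mul D)).symm).trans ?_
  refine (CKA.mul_congr (CKA.refl A) ?_).trans (CKA.mul_assoc A C (B.mul D))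
  exact ((CKA.mul_assoc B C D).trans
    (CKA.mul_congr (CKA.mul_comm B C) (CKA.refl D))).trans (CKA.mul_assoc C B D).symm

lemma unionList_le {L : List (CRE α)} {g : CRE α} (h : ∀ x ∈ L, leq x g) :
    leq (unionList L) g := by
  induction L with
  | nil => exact CKA.zero_union g
  | cons a l ih =>
      exact union_le (h a (by simp)) (ih fun x hx => h x (by simp [hx]))

lemma le_unionList {L : List (CRE α)} {x : CRE α} (h : x ∈ L) : leq x (unionList L) := by
  induction L with
  | nil => cases h
  | cons a l ih =>
      rcases List.mem_cons.1 h with h | h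
      · subst h; exact le_union_left x (unionList l)
      · exact leq_trans (ih h) (le_union_right a (unionList l))

lemma unionList_append (L M : List (CRE α)) :
    CKA (unionList (L ++ M)) ((unionList L).union (unionList M)) := by
  induction L with
  | nil => exact (CKA.zero_union (unionList M)).symm
  | cons a l ih =>
      exact (CKA.union_congr (CKA.refl a) ih).trans
        (CKA.union_assoc a (unionList l) (unionList M))

lemma unionList_map_congr {β : Type} {l : List β} {x y : β → CRE α}
    (h : ∀ b ∈ l, CKA (x b) (y b)) :
    CKA (unionList (l.map x)) (unionList (l.map y)) := by
  induction l with
  | nil => exact CKA.refl _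
  | cons a l ih =>
      exact CKA.union_congr (h a (by simp)) (ih fun b hb => h b (by simp [hb]))

lemma prodList_map_congr {β : Type} {l : List β} {x y : β → CRE α}
    (h : ∀ b ∈ l, CKA (x b) (y b)) :
    CKA (prodList (l.map x)) (prodList (l.map y)) := by
  induction l with
  | nil => exact CKA.refl _
  | cons a l ih =>
      exact CKA.mul_congr (h a (by simp)) (ih fun b hb => h b (by simp [hb]))

lemma prodList_ones {β : Type} {l : List β} {x : β → CRE α}
    (h : ∀ b ∈ l, CKA (x b) CRE.one) :
    CKA (prodList (l.map x)) CRE.one := by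
  induction l with
  | nil => exact CKA.refl _
  | cons a l ih =>
      exact (CKA.mul_congr (h a (by simp)) (ih fun b hb => h b (by simp [hb]))).trans
        (CKA.one_mul CRE.one)

lemma prodList_map_mul {β : Type} (l : List β) (x y : β → CRE α) :
    CKA (prodList (l.map fun b => (x b).mul (y b)))
      ((prodList (l.map x)).mul (prodList (l.map y))) := by
  induction l with
  | nil => exact (CKA.one_mul CRE.one).symm
  | cons a l ih =>
      exact (CKA.mul_congr (CKA.refl _) ih).trans
        (mul_shuffle (x a) (y a) (prodList (l.map x)) (prodList (l.map y)))

lemma pow_add' (e : CRE α) (m n : ℕ) :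
    CKA (pow e (m + n)) ((pow e m).mul (pow e n)) := by
  induction m with
  | zero => simpa [pow] using (CKA.one_mul (pow e n)).symm
  | succ m ih =>
      have : m + 1 + n = (m + n) + 1 := by omega
      rw [this]
      exact ((CKA.mul_congr (CKA.refl e) ih).trans (CKA.mul_assoc e (pow e m) (pow e n)))

lemma exprVec_add (u v : α → ℕ) :
    CKA (exprVec (u + v)) ((exprVec u).mul (exprVec v)) := by
  unfold exprVec
  refine (prodList_map_congr (x := fun a => pow (CRE.letter a) ((u + v) a))
    (y := fun a => (pow (CRE.letter a) (u a)).mul (pow (CRE.letter a) (v a)))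
    (fun a _ => ?_)).trans (prodList_map_mul _ _ _)
  exact pow_add' (CRE.letter a) (u a) (v a)

lemma exprVec_zero : CKA (exprVec (0 : α → ℕ)) CRE.one := by
  unfold exprVec
  exact prodList_ones fun a _ => CKA.refl CRE.one

lemma prod_single_aux (a : α) (l : List α) (ha : a ∈ l) (hnd : l.Nodup) :
    CKA (prodList (l.map fun b => pow (CRE.letter b) ((Pi.single a 1 : α → ℕ) b))) (CRE.letter a) := by
  induction l with
  | nil => cases ha
  | cons b l ih =>
      rcases List.mem_cons.1 ha with hb | hb
      · subst hb
        have h1 : (Pi.single a 1 : α → ℕ) a = 1 := by simp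
        have hrest : CKA (prodList (l.map fun c => pow (CRE.letter c) ((Pi.single a 1 : α → ℕ) c)))
            CRE.one := by
          refine prodList_ones fun c hc => ?_
          have hcb : c ≠ a := fun h => (List.nodup_cons.1 hnd).1 (h ▸ hc)
          rw [Pi.single_eq_of_ne hcb]
          exact CKA.refl _
        simp only [List.map_cons, prodList, h1]
        exact (CKA.mul_congr (CKA.refl _) hrest).trans
          ((mul_one' _).trans (mul_one' _))
      · have hba : b ≠ a := fun h => (List.nodup_cons.1 hnd).1 (h ▸ hb)
        have h0 : (Pi.single a 1 : α → ℕ) b = 0 := Pi.single_eq_of_ne hba 1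
        simp only [List.map_cons, prodList, h0]
        exact (CKA.one_mul _).trans (ih hb (List.nodup_cons.1 hnd).2)

lemma exprVec_single (a : α) : CKA (exprVec (Pi.single a 1)) (CRE.letter a) :=
  prod_single_aux a _ (by simp) (Finset.nodup_toList _)

lemma mem_sem_le (f : CRE α) : ∀ u ∈ sem f, leq (exprVec u) f := by
  induction f with
  | zero => intro u hu; cases hu
  | one =>
      intro u hu
      have : u = 0 := hu
      subst this
      exact cka_leq exprVec_zero
  | letter a =>
      intro u hu
      have : u = Pi.single a 1 := hu
      subst this
      exact cka_leq (exprVec_single a)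
  | mul f g ihf ihg =>
      intro u hu
      obtain ⟨v, hv, w, hw, rfl⟩ := hu
      exact leq_trans (cka_leq (exprVec_add v w)) (mul_mono (ihf v hv) (ihg w hw))
  | union f g ihf ihg =>
      intro u hu
      rcases hu with hu | hu
      · exact leq_trans (ihf u hu) (le_union_left f g)
      · exact leq_trans (ihg u hu) (le_union_right f g)
  | star f ihf =>
      intro u hu
      induction hu using AddSubmonoid.closure_induction with
      | mem x hx => exact leq_trans (ihf x hx) (le_star f)
      | zero => exact leq_trans (cka_leq exprVec_zero) (one_le_star f)
      | add x y hx hy ihx ihy =>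
          exact leq_trans (cka_leq (exprVec_add x y))
            (leq_trans (mul_mono ihx ihy) (star_mul_star_le f))

lemma mul_unionList_right (g : CRE α) (M : List (CRE α)) :
    CKA (g.mul (unionList M)) (unionList (M.map (g.mul ·))) := by
  induction M with
  | nil =>
      exact (CKA.mul_comm g CRE.zero).trans (CKA.zero_mul g)
  | cons a l ih =>
      exact (CKA.left_distrib g a (unionList l)).trans
        (CKA.union_congr (CKA.refl _) ih)

lemma mul_unionList_left (g : CRE α) (L : List (CRE α)) :
    CKA ((unionList L).mul g) (unionList (L.map (·.mul g))) := by
  refine (CKA.mul_comm _ g).trans ((mul_unionList_right g L).trans ?_)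
  exact unionList_map_congr fun b _ => CKA.mul_comm g b

lemma unionList_bind {β : Type} (l : List β) (f : β → List (CRE α)) :
    CKA (unionList (l.flatMap f)) (unionList (l.map fun b => unionList (f b))) := by
  induction l with
  | nil => exact CKA.refl _
  | cons a l ih =>
      exact (unionList_append (f a) (l.flatMap f)).trans
        (CKA.union_congr (CKA.refl _) ih)

lemma normal_form (e : CRE α) (he : NoStar e) :
    ∃ L : List (α → ℕ), (∀ u, u ∈ sem e ↔ u ∈ L) ∧
      CKA e (unionList (L.map exprVec)) := by
  induction e with
  | zero =>
      exact ⟨[], fun u => by simp [sem], CKA.refl _⟩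
  | one =>
      refine ⟨[0], fun u => by simp [sem], ?_⟩
      simp only [List.map_cons, List.map_nil, unionList]
      exact (exprVec_zero.symm).trans
        (((CKA.zero_union (exprVec 0)).symm).trans (CKA.union_comm _ _))
  | letter a =>
      refine ⟨[Pi.single a 1], fun u => by simp [sem], ?_⟩
      simp only [List.map_cons, List.map_nil, unionList]
      exact ((exprVec_single a).symm).trans
        (((CKA.zero_union _).symm).trans (CKA.union_comm _ _))
  | mul f g ihf ihg =>
      obtain ⟨hf, hg⟩ := he
      obtain ⟨L, hL, eL⟩ := ihf hf
      obtain ⟨M, hM, eM⟩ := ihg hg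
      refine ⟨L.flatMap fun v => M.map fun w => v + w, fun u => ?_, ?_⟩
      · simp only [sem, Set.mem_setOf_eq, List.mem_flatMap, List.mem_map]
        constructor
        · rintro ⟨v, hv, w, hw, rfl⟩
          exact ⟨v, (hL v).1 hv, w, (hM w).1 hw, rfl⟩
        · rintro ⟨v, hv, w, hw, rfl⟩
          exact ⟨v, (hL v).2 hv, w, (hM w).2 hw, rfl⟩
      · refine (CKA.mul_congr eL eM).trans ?_
        refine (mul_unionList_left _ _).trans ?_
        rw [List.map_map]
        refine (unionList_map_congr (y := fun v =>
          unionList (M.map fun w => exprVec (v + w))) fun v _ => ?_).trans ?_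
        · refine (mul_unionList_right _ _).trans ?_
          rw [List.map_map]
          exact unionList_map_congr fun w _ => (exprVec_add v w).symm
        · rw [List.map_flatMap]
          refine CKA.trans ?_ (unionList_bind L _).symm
          refine unionList_map_congr fun v _ => ?_
          simp only [List.map_map, Function.comp_def]
          exact CKA.refl _
  | union f g ihf ihg =>
      obtain ⟨hf, hg⟩ := he
      obtain ⟨L, hL, eL⟩ := ihf hf
      obtain ⟨M, hM, eM⟩ := ihg hg
      refine ⟨L ++ M, fun u => ?_, ?_⟩
      · simp only [sem, Set.mem_union, List.mem_append, hL u, hM u]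
      · rw [List.map_append]
        exact (CKA.union_congr eL eM).trans (unionList_append _ _).symm
  | star f _ => cases he

end Lemmas

/-- If `e` is finitary (star-free) and `⟦e⟧ ⊆ ⟦f⟧`, then `e ≤ f` is derivable. -/
theorem fin_incl (e f : CRE α) (he : NoStar e) (h : sem e ⊆ sem f) :
    leq e f := by
  obtain ⟨L, hL, eL⟩ := normal_form e he
  refine leq_trans (cka_leq eL) (unionList_le fun x hx => ?_)
  obtain ⟨u, hu, rfl⟩ := List.mem_map.1 hx
  exact mem_sem_le f u (h ((hL u).2 hu))

end CKAnote
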